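/- With the zero-subspace transformation and (A,B,C) of relative degree ρ, there exists ε ∈ {1, −1}, independent of s, such that for every s ∈ 𝕜: C * adjugate(s·I_n − A) * B = ε · (C * A^(ρ−1) * B) · det(s·I_{l_z} − A_η) (equality of scalars, identifying the 1×1 matrices with their unique entries). -/

import Mathlib

open Matrix

lemma detD_aux {𝕜 : Type*} [Field 𝕜] (ρ : ℕ) (hρ : 1 ≤ ρ) (s : 𝕜)
    (D : Matrix (Fin ρ) (Fin ρ) 𝕜)
    (h1 : ∀ k l : Fin ρ, (k : ℕ) + 1 = ρ → D k l = if (l : ℕ) = 0 then 1 else 0)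
    (h2 : ∀ k l : Fin ρ, (k : ℕ) + 1 < ρ →
      D k l = s * (if (k : ℕ) = (l : ℕ) then 1 else 0)
        - (if (k : ℕ) + 1 = (l : ℕ) then 1 else 0)) :
    D.det = 1 := by
  obtain ⟨r, rfl⟩ : ∃ r, ρ = r + 1 := ⟨ρ - 1, by omega⟩
  set U : Matrix (Fin (r + 1)) (Fin (r + 1)) 𝕜 :=
    of fun k j => if (j : ℕ) ≤ (k : ℕ) then s ^ ((k : ℕ) - (j : ℕ)) else 0 with hU
  have hUdet : U.det = 1 := by
    rw [Matrix.det_of_lowerTriangular U (by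
      intro i j hij
      have : (i : ℕ) < (j : ℕ) := hij
      simp only [hU, of_apply]
      rw [if_neg (by omega)])]
    simp [hU]
  set d : Fin (r + 1) → 𝕜 := fun k => if (k : ℕ) = r then 1 else -1 with hd
  have hDU : D * U = Matrix.diagonal d * (finRotate (r + 1)).permMatrix 𝕜 := by
    ext k j
    rw [Matrix.mul_apply, Matrix.diagonal_mul]
    have hP : ∀ i j : Fin (r+1), (finRotate (r + 1)).permMatrix 𝕜 i j
        = if finRotate (r + 1) i = j then 1 else 0 := by
      intro i j
      simp [Equiv.Perm.permMatrix, PEquiv.toMatrix_apply, Equiv.toPEquiv_apply, Option.mem_def]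
    rw [hP]
    rcases Nat.lt_or_ge ((k : ℕ) + 1) (r + 1) with hk | hk
    · -- non-last row
      have hsum : ∀ l : Fin (r + 1), D k l * U l j =
          (if l = k then s * U l j else 0) - (if l = ⟨(k : ℕ) + 1, by omega⟩ then U l j else 0) := by
        intro l
        rw [h2 k l hk]
        simp only [Fin.ext_iff]
        split_ifs <;> first | ring1 | (exfalso; omega)
      rw [Finset.sum_congr rfl fun l _ => hsum l, Finset.sum_sub_distrib,
        Finset.sum_ite_eq' Finset.univ k (fun l => s * U l j),
        Finset.sum_ite_eq' Finset.univ (⟨(k : ℕ) + 1, by omega⟩ : Fin (r+1)) (fun l => U l j),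
        if_pos (Finset.mem_univ _), if_pos (Finset.mem_univ _)]
      have hkl : k ≠ Fin.last r := by
        intro hc
        have := congrArg Fin.val hc
        rw [Fin.val_last] at this
        omega
      have hrot : finRotate (r + 1) k = ⟨(k : ℕ) + 1, by omega⟩ := by
        rw [finRotate_succ_apply]
        apply Fin.ext
        rw [Fin.val_add_one]
        simp [hkl]
      rw [hrot, hd]
      simp only [hU, of_apply, Fin.ext_iff]
      rw [if_neg (show ¬ (k : ℕ) = r by omega)]
      split_ifs <;>
        first
          | (exfalso; omega)
          | ring1
          | (rw [show (k : ℕ) + 1 - (j : ℕ) = ((k : ℕ) - (j : ℕ)) + 1 from by omega, pow_succ'];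
             ring1)
          | (rw [show (k : ℕ) + 1 - (j : ℕ) = 0 from by omega, pow_zero]; ring1)
    · -- last row
      have hkval : (k : ℕ) = r := by omega
      have hsum : ∀ l : Fin (r + 1), D k l * U l j =
          if l = 0 then U l j else 0 := by
        intro l
        rw [h1 k l (by omega)]
        simp only [Fin.ext_iff, Fin.val_zero]
        split_ifs <;> first | ring1 | (exfalso; omega)
      rw [Finset.sum_congr rfl fun l _ => hsum l,
        Finset.sum_ite_eq' Finset.univ (0 : Fin (r+1)) (fun l => U l j),
        if_pos (Finset.mem_univ _)]
      have hrot : finRotate (r + 1) k = 0 := by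
        have : k = Fin.last r := Fin.ext (by rw [Fin.val_last]; exact hkval)
        rw [this, finRotate_succ_apply, Fin.last_add_one]
      rw [hrot, hd]
      simp only [hU, of_apply, Fin.ext_iff, Fin.val_zero]
      rw [if_pos hkval]
      split_ifs <;> first | (exfalso; omega) | simp [Nat.zero_sub]
      all_goals (simp only [Fin.ext_iff, Fin.val_zero]; split_ifs <;> first | rfl | (exfalso; omega))
  have hprod : (∏ i, d i) = (-1 : 𝕜) ^ r := by
    rw [Fin.prod_univ_castSucc]
    have h1' : d (Fin.last r) = 1 := by simp [hd]
    have h2' : ∀ i : Fin r, d i.castSucc = -1 := by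
      intro i; simp only [hd, Fin.coe_castSucc]; rw [if_neg (by omega)]
    rw [h1', mul_one, Finset.prod_congr rfl fun i _ => h2' i, Finset.prod_const]
    simp
  have hsign : ((finRotate (r + 1)).permMatrix 𝕜).det = (-1 : 𝕜) ^ r := by
    rw [Matrix.det_permutation, sign_finRotate]
    push_cast
    simp
  have hDdet : D.det * U.det = ((-1 : 𝕜) ^ r) * ((-1 : 𝕜) ^ r) := by
    rw [← Matrix.det_mul, hDU, Matrix.det_mul, Matrix.det_diagonal, hprod, hsign]
  rw [hUdet, mul_one] at hDdet
  rw [hDdet, ← pow_add]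
  exact Even.neg_one_pow ⟨r, rfl⟩

set_option maxHeartbeats 1600000 in
/-- There exists `ε ∈ {1, -1}`, independent of `s`, with
`C * adj(s I - A) * B = ε * (C * A^(ρ-1) * B) * det(s I - A_η)` for all `s`. -/
theorem stmt9 {𝕜 : Type*} [Field 𝕜] {n ρ : ℕ} (hn : 1 ≤ n) (hρ : 1 ≤ ρ) (hρn : ρ ≤ n)
    (A : Matrix (Fin n) (Fin n) 𝕜) (B : Matrix (Fin n) (Fin 1) 𝕜)
    (C : Matrix (Fin 1) (Fin n) 𝕜)
    (hrd : ∀ i : ℕ, i + 2 ≤ ρ → C * A ^ i * B = 0)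
    (hrd' : C * A ^ (ρ - 1) * B ≠ 0)
    (Cbar : Matrix (Fin ρ) (Fin n) 𝕜)
    (hCbar : ∀ (i : Fin ρ) (j : Fin n), Cbar i j = (C * A ^ (i : ℕ)) 0 j)
    (Bz : Matrix (Fin (n - ρ)) (Fin n) 𝕜) (hBz : Bz * B = 0)
    (T : Matrix (Fin n) (Fin n) 𝕜)
    (hT : ∀ (i : Fin n) (j : Fin n),
      T i j = if h : (i : ℕ) < n - ρ then Bz ⟨i, h⟩ j
              else Cbar ⟨(i : ℕ) - (n - ρ), by omega⟩ j)
    (hTinv : IsUnit T.det)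
    (Seta : Matrix (Fin n) (Fin (n - ρ)) 𝕜)
    (hSeta : ∀ (i : Fin n) (k : Fin (n - ρ)), Seta i k = T⁻¹ i ⟨(k : ℕ), by omega⟩)
    (Sxi : Matrix (Fin n) (Fin ρ) 𝕜)
    (hSxi : ∀ (i : Fin n) (k : Fin ρ), Sxi i k = T⁻¹ i ⟨n - ρ + (k : ℕ), by omega⟩)
    (Aeta : Matrix (Fin (n - ρ)) (Fin (n - ρ)) 𝕜)
    (hAeta : Aeta = Bz * A * Seta)
    :
    ∃ ε : 𝕜, (ε = 1 ∨ ε = -1) ∧ ∀ s : 𝕜,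
      (C * (s • (1 : Matrix (Fin n) (Fin n) 𝕜) - A).adjugate * B) 0 0 =
        ε * (C * A ^ (ρ - 1) * B) 0 0 *
          (s • (1 : Matrix (Fin (n - ρ)) (Fin (n - ρ)) 𝕜) - Aeta).det := by
  refine ⟨1, Or.inl rfl, fun s => ?_⟩
  rw [one_mul]
  have hTT : T * T⁻¹ = 1 := mul_nonsing_inv T hTinv
  have hTT' : T⁻¹ * T = 1 := nonsing_inv_mul T hTinv
  set mIdx : Fin n := ⟨n - ρ, by omega⟩ with hmIdxdef
  set lastIdx : Fin n := ⟨n - 1, by omega⟩ with hlastdef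
  have hmIdxv : (mIdx : ℕ) = n - ρ := rfl
  have hlastv : (lastIdx : ℕ) = n - 1 := rfl
  set γ : 𝕜 := (C * A ^ (ρ - 1) * B) 0 0 with hγ
  -- rows of T
  have hrowBz : ∀ (i : Fin n) (i' : Fin (n - ρ)), (i : ℕ) = (i' : ℕ) →
      ∀ j, T i j = Bz i' j := by
    intro i i' hi j
    rw [hT, dif_pos (show (i : ℕ) < n - ρ by omega)]
    congr 1
    exact Fin.ext (show (i : ℕ) = (i' : ℕ) from hi)
  have hrowCbar : ∀ (i : Fin n) (k : Fin ρ), (i : ℕ) = n - ρ + (k : ℕ) →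
      ∀ j, T i j = Cbar k j := by
    intro i k hi j
    rw [hT, dif_neg (show ¬ ((i : ℕ) < n - ρ) by omega)]
    congr 1
    exact Fin.ext (show (i : ℕ) - (n - ρ) = (k : ℕ) by omega)
  have hrowC : ∀ j, T mIdx j = C 0 j := by
    intro j
    rw [hrowCbar mIdx ⟨0, by omega⟩ (by rw [hmIdxv]; simp) j, hCbar]
    have h0 : ((⟨0, by omega⟩ : Fin ρ) : ℕ) = 0 := rfl
    rw [h0, pow_zero, Matrix.mul_one]
  -- C * T⁻¹ is the mIdx-th unit row
  have hCTinv : ∀ j, (C * T⁻¹) 0 j = (1 : Matrix (Fin n) (Fin n) 𝕜) mIdx j := by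
    intro j
    rw [← hTT, Matrix.mul_apply, Matrix.mul_apply]
    exact Finset.sum_congr rfl fun l _ => by rw [hrowC l]
  -- T * B is γ times the last unit column
  have hTB : ∀ i : Fin n, (T * B) i 0 = if i = lastIdx then γ else 0 := by
    intro i
    rcases Nat.lt_or_ge (i : ℕ) (n - ρ) with hi | hi
    · rw [if_neg (fun hc => by rw [hc] at hi; omega)]
      have h1 : (T * B) i 0 = (Bz * B) ⟨(i : ℕ), hi⟩ 0 := by
        rw [Matrix.mul_apply, Matrix.mul_apply]
        exact Finset.sum_congr rfl fun l _ => by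
          rw [hrowBz i ⟨(i : ℕ), hi⟩ rfl l]
      rw [h1, hBz, Matrix.zero_apply]
    · set k : Fin ρ := ⟨(i : ℕ) - (n - ρ), by omega⟩ with hkdef
      have hkv : (k : ℕ) = (i : ℕ) - (n - ρ) := rfl
      have hTBi : (T * B) i 0 = (C * A ^ (k : ℕ) * B) 0 0 := by
        rw [Matrix.mul_apply]
        rw [Finset.sum_congr rfl fun l (_ : l ∈ Finset.univ) => by
          rw [hrowCbar i k (by omega) l, hCbar k l]]
        rw [Matrix.mul_apply]
      by_cases hl : i = lastIdx
      · rw [if_pos hl, hTBi, hγ]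
        have : (k : ℕ) = ρ - 1 := by
          have := congrArg Fin.val hl
          rw [hlastv] at this
          omega
        rw [this]
      · rw [if_neg hl, hTBi]
        have hine : (i : ℕ) ≠ n - 1 := fun hc => hl (Fin.ext (by rw [hlastv]; exact hc))
        have hk2 : (k : ℕ) + 2 ≤ ρ := by omega
        rw [hrd (k : ℕ) hk2, Matrix.zero_apply]
  -- the conjugated matrix
  have hadj : ∀ (M : Matrix (Fin n) (Fin n) 𝕜), IsUnit M.det → M.adjugate = M.det • M⁻¹ := by
    intro M h
    rw [Matrix.inv_def, smul_smul, Ring.mul_inverse_cancel _ h, one_smul]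
  have hconj : s • (1 : Matrix (Fin n) (Fin n) 𝕜) - T * A * T⁻¹
      = T * (s • (1 : Matrix (Fin n) (Fin n) 𝕜) - A) * T⁻¹ := by
    rw [Matrix.mul_sub, Matrix.sub_mul, Matrix.mul_smul, Matrix.mul_one, Matrix.smul_mul, hTT]
  set N : Matrix (Fin n) (Fin n) 𝕜 := s • (1 : Matrix (Fin n) (Fin n) 𝕜) - T * A * T⁻¹ with hN
  have hdet1 : T⁻¹.det * T.det = 1 := Matrix.det_nonsing_inv_mul_det T hTinv
  have hadjN : N.adjugate = T * (s • (1 : Matrix (Fin n) (Fin n) 𝕜) - A).adjugate * T⁻¹ := by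
    rw [hconj, Matrix.adjugate_mul_distrib, Matrix.adjugate_mul_distrib,
      hadj T hTinv, hadj T⁻¹ (isUnit_nonsing_inv_det T hTinv), nonsing_inv_nonsing_inv T hTinv]
    simp only [Matrix.smul_mul, Matrix.mul_smul, smul_smul, Matrix.mul_assoc]
    rw [mul_comm T.det, hdet1, one_smul]
  have hLHS : C * (s • (1 : Matrix (Fin n) (Fin n) 𝕜) - A).adjugate * B
      = (C * T⁻¹) * N.adjugate * (T * B) := by
    rw [hadjN]
    simp only [Matrix.mul_assoc]
    rw [Matrix.nonsing_inv_mul_cancel_left _ _ hTinv, Matrix.nonsing_inv_mul_cancel_left _ _ hTinv]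
  have hentry : ((C * T⁻¹) * N.adjugate * (T * B)) 0 0 = N.adjugate mIdx lastIdx * γ := by
    have hterm1 : ∀ j : Fin n, (C * T⁻¹) 0 j * (N.adjugate * (T * B)) j 0
        = if j = mIdx then (N.adjugate * (T * B)) j 0 else 0 := by
      intro j
      rw [hCTinv j, Matrix.one_apply]
      by_cases h : j = mIdx
      · rw [if_pos h, if_pos h.symm, one_mul]
      · rw [if_neg (fun hc => h hc.symm), if_neg h, zero_mul]
    have hterm2 : ∀ l : Fin n, N.adjugate mIdx l * (T * B) l 0
        = if l = lastIdx then N.adjugate mIdx l * γ else 0 := by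
      intro l
      rw [hTB l]
      by_cases h : l = lastIdx
      · rw [if_pos h, if_pos h]
      · rw [if_neg h, if_neg h, mul_zero]
    rw [Matrix.mul_assoc, Matrix.mul_apply]
    rw [Finset.sum_congr rfl fun j (_ : j ∈ Finset.univ) => hterm1 j]
    rw [Finset.sum_ite_eq' Finset.univ mIdx (fun j => (N.adjugate * (T * B)) j 0),
      if_pos (Finset.mem_univ _), Matrix.mul_apply]
    rw [Finset.sum_congr rfl fun l (_ : l ∈ Finset.univ) => hterm2 l]
    rw [Finset.sum_ite_eq' Finset.univ lastIdx (fun l => N.adjugate mIdx l * γ),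
      if_pos (Finset.mem_univ _)]
  set M' : Matrix (Fin n) (Fin n) 𝕜 := N.updateRow lastIdx (Pi.single mIdx 1) with hM'
  have hadj_entry : N.adjugate mIdx lastIdx = M'.det := Matrix.adjugate_apply N mIdx lastIdx
  -- entries of T * A * T⁻¹
  have hATeta : ∀ (i : Fin n) (i' : Fin (n - ρ)), (i : ℕ) = (i' : ℕ) →
      ∀ (j : Fin n) (j' : Fin (n - ρ)), (j : ℕ) = (j' : ℕ) →
      (T * A * T⁻¹) i j = Aeta i' j' := by
    intro i i' hi j j' hj
    rw [Matrix.mul_assoc, Matrix.mul_apply]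
    rw [Finset.sum_congr rfl fun l (_ : l ∈ Finset.univ) => by
      rw [hrowBz i i' hi l]]
    rw [← Matrix.mul_apply, hAeta, ← Matrix.mul_assoc, Matrix.mul_apply, Matrix.mul_apply]
    refine Finset.sum_congr rfl fun l _ => ?_
    rw [hSeta l j']
    exact congrArg (fun x => (Bz * A) i' l * T⁻¹ l x)
      (Fin.ext (show (j : ℕ) = (j' : ℕ) from hj))
  have hATxi : ∀ (k : Fin ρ), (k : ℕ) + 1 < ρ →
      ∀ (i : Fin n), (i : ℕ) = n - ρ + (k : ℕ) →
      ∀ j : Fin n, (T * A * T⁻¹) i j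
        = if n - ρ + (k : ℕ) + 1 = (j : ℕ) then 1 else 0 := by
    intro k hk i hi j
    set k1 : Fin ρ := ⟨(k : ℕ) + 1, by omega⟩ with hk1def
    have hk1 : (k1 : ℕ) = (k : ℕ) + 1 := rfl
    set i2 : Fin n := ⟨n - ρ + (k : ℕ) + 1, by omega⟩ with hi2def
    have hi2 : (i2 : ℕ) = n - ρ + (k : ℕ) + 1 := rfl
    have e1 : (T * A * T⁻¹) i j = (C * A ^ ((k : ℕ) + 1) * T⁻¹) 0 j := by
      rw [Matrix.mul_assoc, Matrix.mul_apply]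
      rw [Finset.sum_congr rfl fun l (_ : l ∈ Finset.univ) => by
        rw [hrowCbar i k hi l, hCbar k l]]
      rw [← Matrix.mul_apply]
      rw [show C * A ^ (k : ℕ) * (A * T⁻¹) = C * A ^ ((k : ℕ) + 1) * T⁻¹ from by
        rw [pow_succ]; simp only [Matrix.mul_assoc]]
    have e2 : (C * A ^ ((k : ℕ) + 1) * T⁻¹) 0 j = (T * T⁻¹) i2 j := by
      rw [Matrix.mul_apply, Matrix.mul_apply]
      refine Finset.sum_congr rfl fun l _ => ?_
      rw [hrowCbar i2 k1 (by omega) l, hCbar, hk1]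
    rw [e1, e2, hTT, Matrix.one_apply]
    by_cases h : i2 = j
    · rw [if_pos h, if_pos (by rw [← h, hi2])]
    · rw [if_neg h, if_neg (fun hc => h (Fin.ext (by rw [hi2]; exact hc)))]
  -- block decomposition
  have hmn : (n - ρ) + ρ = n := by omega
  set eqv : Fin (n - ρ) ⊕ Fin ρ ≃ Fin n := finSumFinEquiv.trans (finCongr hmn) with heqv
  have heqv1 : ∀ i : Fin (n - ρ), (eqv (Sum.inl i) : ℕ) = (i : ℕ) := by
    intro i; rw [heqv]; simp
  have heqv2 : ∀ k : Fin ρ, (eqv (Sum.inr k) : ℕ) = n - ρ + (k : ℕ) := by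
    intro k; rw [heqv]; simp
  set Ms := M'.submatrix eqv eqv with hMs
  have hdet_sub : M'.det = Ms.det := (Matrix.det_submatrix_equiv_self eqv M').symm
  have h21 : Ms.toBlocks₂₁ = 0 := by
    ext k i
    simp only [Matrix.toBlocks₂₁, Matrix.zero_apply, Matrix.of_apply, hMs, Matrix.submatrix_apply]
    by_cases hk : (k : ℕ) + 1 = ρ
    · have hrow : eqv (Sum.inr k) = lastIdx := Fin.ext (by rw [heqv2, hlastv]; omega)
      rw [hM', hrow, Matrix.updateRow_self, Pi.single_apply,
        if_neg (fun hc => by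
          have := congrArg Fin.val hc
          rw [heqv1, hmIdxv] at this
          omega)]
    · have hrowne : eqv (Sum.inr k) ≠ lastIdx := fun hc => by
        have := congrArg Fin.val hc
        rw [heqv2, hlastv] at this
        omega
      rw [hM', Matrix.updateRow_ne hrowne, hN, Matrix.sub_apply, Matrix.smul_apply,
        smul_eq_mul, hATxi k (by omega) (eqv (Sum.inr k)) (heqv2 k) (eqv (Sum.inl i)),
        Matrix.one_apply_ne (fun hc => by
          have := congrArg Fin.val hc
          rw [heqv2, heqv1] at this
          omega : eqv (Sum.inr k) ≠ eqv (Sum.inl i)),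
        if_neg (show ¬ (n - ρ + (k : ℕ) + 1 = ((eqv (Sum.inl i)) : ℕ)) from by
          rw [heqv1]
          have := i.isLt
          omega)]
      ring1
  have h11 : Ms.toBlocks₁₁ = s • (1 : Matrix (Fin (n - ρ)) (Fin (n - ρ)) 𝕜) - Aeta := by
    ext i j
    simp only [Matrix.toBlocks₁₁, Matrix.of_apply, hMs, Matrix.submatrix_apply,
      Matrix.sub_apply, Matrix.smul_apply, smul_eq_mul]
    have hrowne : eqv (Sum.inl i) ≠ lastIdx := fun hc => by
      have := congrArg Fin.val hc
      rw [heqv1, hlastv] at this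
      omega
    rw [hM', Matrix.updateRow_ne hrowne, hN, Matrix.sub_apply, Matrix.smul_apply, smul_eq_mul,
      hATeta (eqv (Sum.inl i)) i (heqv1 i) (eqv (Sum.inl j)) j (heqv1 j),
      Matrix.one_apply, Matrix.one_apply]
    by_cases h : i = j
    · rw [if_pos (by rw [h]), if_pos h]
    · rw [if_neg (fun hc => h (by
        have := congrArg Fin.val hc
        rw [heqv1, heqv1] at this
        exact Fin.ext this)), if_neg h]
  have h22 : Ms.toBlocks₂₂.det = 1 := by
    apply detD_aux ρ hρ s
    · intro k l hk
      simp only [Matrix.toBlocks₂₂, Matrix.of_apply, hMs, Matrix.submatrix_apply]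
      have hrow : eqv (Sum.inr k) = lastIdx := Fin.ext (by rw [heqv2, hlastv]; omega)
      rw [hM', hrow, Matrix.updateRow_self, Pi.single_apply]
      by_cases h : (l : ℕ) = 0
      · rw [if_pos h, if_pos (Fin.ext (by rw [heqv2, hmIdxv]; omega))]
      · rw [if_neg h, if_neg (fun hc => by
          have := congrArg Fin.val hc
          rw [heqv2, hmIdxv] at this
          omega)]
    · intro k l hk
      simp only [Matrix.toBlocks₂₂, Matrix.of_apply, hMs, Matrix.submatrix_apply]
      have hrowne : eqv (Sum.inr k) ≠ lastIdx := fun hc => by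
        have := congrArg Fin.val hc
        rw [heqv2, hlastv] at this
        omega
      rw [hM', Matrix.updateRow_ne hrowne, hN, Matrix.sub_apply, Matrix.smul_apply,
        smul_eq_mul, hATxi k hk (eqv (Sum.inr k)) (heqv2 k) (eqv (Sum.inr l)),
        Matrix.one_apply]
      have hv : (eqv (Sum.inr l) : ℕ) = n - ρ + (l : ℕ) := heqv2 l
      by_cases h1' : (k : ℕ) = (l : ℕ)
      · rw [if_pos (show eqv (Sum.inr k) = eqv (Sum.inr l) from
            congrArg eqv (congrArg Sum.inr (Fin.ext h1'))), if_pos h1',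
          if_neg (show ¬ (n - ρ + (k : ℕ) + 1 = ((eqv (Sum.inr l)) : ℕ)) from by
            rw [hv]; omega),
          if_neg (by omega)]
      · rw [if_neg (fun hc => by
            have := congrArg Fin.val hc
            rw [heqv2, hv] at this
            omega), if_neg h1']
        by_cases h2' : (k : ℕ) + 1 = (l : ℕ)
        · rw [if_pos (show n - ρ + (k : ℕ) + 1 = ((eqv (Sum.inr l)) : ℕ) from by
            rw [hv]; omega), if_pos h2']
        · rw [if_neg (show ¬ (n - ρ + (k : ℕ) + 1 = ((eqv (Sum.inr l)) : ℕ)) from by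
            rw [hv]; omega), if_neg h2']
  have hMsdet : Ms.det = (s • (1 : Matrix (Fin (n - ρ)) (Fin (n - ρ)) 𝕜) - Aeta).det := by
    rw [← Matrix.fromBlocks_toBlocks Ms, h21, Matrix.det_fromBlocks_zero₂₁, h11, h22, mul_one]
  rw [hLHS, hentry, hadj_entry, hdet_sub, hMsdet]
  exact mul_comm _ _
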